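/- The submonoid of End(F₂) generated by T̂₁ and T̂₂ is free on these two generators: the monoid homomorphism from the free monoid on two generators into the endomorphism monoid of F₂ sending the first generator to T̂₁ and the second to T̂₂ is injective. -/

import Mathlib

/-- The free group on two generators. -/
abbrev F2 := FreeGroup (Fin 2)

/-- The first generator `a` of `F₂`. -/
def a : F2 := FreeGroup.of 0

/-- The second generator `b` of `F₂`. -/
def b : F2 := FreeGroup.of 1

/-- The endomorphism `T̂₁` of `F₂` determined by `a ↦ a·b`, `b ↦ b`. -/
def T1hat : Monoid.End F2 := FreeGroup.lift fun i => if i = 0 then a * b else b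

/-- The endomorphism `T̂₂` of `F₂` determined by `a ↦ a`, `b ↦ b·a`. -/
def T2hat : Monoid.End F2 := FreeGroup.lift fun i => if i = 0 then a else b * a

def αh : F2 →* Multiplicative ℤ :=
  FreeGroup.lift fun i => if i = 0 then Multiplicative.ofAdd 1 else 1
def βh : F2 →* Multiplicative ℤ :=
  FreeGroup.lift fun i => if i = 0 then 1 else Multiplicative.ofAdd 1

lemma comp1a : αh.comp (T1hat : F2 →* F2) = αh := by
  apply FreeGroup.ext_hom; intro i; fin_cases i <;> simp [αh, T1hat, a, b]
lemma comp1b : βh.comp (T1hat : F2 →* F2) = αh * βh := by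
  apply FreeGroup.ext_hom; intro i; fin_cases i <;> simp [αh, βh, T1hat, a, b]
lemma comp2a : αh.comp (T2hat : F2 →* F2) = αh * βh := by
  apply FreeGroup.ext_hom; intro i; fin_cases i <;> simp [αh, βh, T2hat, a, b]
lemma comp2b : βh.comp (T2hat : F2 →* F2) = βh := by
  apply FreeGroup.ext_hom; intro i; fin_cases i <;> simp [βh, T2hat, a, b]

def A (g : F2) : ℤ := Multiplicative.toAdd (αh g)
def B (g : F2) : ℤ := Multiplicative.toAdd (βh g)

lemma A_T1 (g : F2) : A (T1hat g) = A g := by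
  have this : αh (T1hat g) = αh g := DFunLike.congr_fun comp1a g; simpa [A] using this
lemma B_T1 (g : F2) : B (T1hat g) = A g + B g := by
  have this : βh (T1hat g) = (αh * βh) g := DFunLike.congr_fun comp1b g; simp [B, A] at this ⊢
  rw [this]; simp
lemma A_T2 (g : F2) : A (T2hat g) = A g + B g := by
  have this : αh (T2hat g) = (αh * βh) g := DFunLike.congr_fun comp2a g; simp [B, A] at this ⊢
  rw [this]; simp
lemma B_T2 (g : F2) : B (T2hat g) = B g := by
  have this : βh (T2hat g) = βh g := DFunLike.congr_fun comp2b g; simpa [B] using this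

lemma A_ab : A (a * b) = 1 := by simp [A, αh, a, b]
lemma B_ab : B (a * b) = 1 := by simp [B, βh, a, b]

def S1 : F2 →* F2 := FreeGroup.lift fun i => if i = 0 then a * b⁻¹ else b
def S2 : F2 →* F2 := FreeGroup.lift fun i => if i = 0 then a else b * a⁻¹

lemma T1hat_inj : Function.Injective T1hat := by
  have h : S1.comp (T1hat : F2 →* F2) = MonoidHom.id F2 := by
    apply FreeGroup.ext_hom; intro i; fin_cases i <;> simp [S1, T1hat, a, b]
  intro x y hxy
  have this : ∀ g, S1 (T1hat g) = MonoidHom.id F2 g := fun g => DFunLike.congr_fun h g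
  simp at this
  rw [← this x, ← this y, hxy]

lemma T2hat_inj : Function.Injective T2hat := by
  have h : S2.comp (T2hat : F2 →* F2) = MonoidHom.id F2 := by
    apply FreeGroup.ext_hom; intro i; fin_cases i <;> simp [S2, T2hat, a, b]
  intro x y hxy
  have this : ∀ g, S2 (T2hat g) = MonoidHom.id F2 g := fun g => DFunLike.congr_fun h g
  simp at this
  rw [← this x, ← this y, hxy]

noncomputable def Φ := FreeMonoid.lift fun i : Fin 2 => if i = 0 then T1hat else T2hat

lemma Φ_cons (x : Fin 2) (w : FreeMonoid (Fin 2)) (g : F2) :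
    Φ (FreeMonoid.of x * w) g = (if x = 0 then T1hat else T2hat) (Φ w g) := by
  simp only [Φ, map_mul, FreeMonoid.lift_eval_of]
  by_cases hx : x = 0 <;> simp [hx, Monoid.End.coe_mul]

lemma pos (w : FreeMonoid (Fin 2)) : 1 ≤ A (Φ w (a * b)) ∧ 1 ≤ B (Φ w (a * b)) := by
  induction w using FreeMonoid.recOn with
  | one => simp [Φ, A_ab, B_ab]
  | of_mul x xs ih =>
    rw [Φ_cons]
    by_cases hx : x = 0
    · rw [if_pos hx, A_T1, B_T1]; omega
    · rw [if_neg hx, A_T2, B_T2]; omega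

lemma sign0 (w : FreeMonoid (Fin 2)) :
    A (Φ (FreeMonoid.of 0 * w) (a * b)) < B (Φ (FreeMonoid.of 0 * w) (a * b)) := by
  rw [Φ_cons, if_pos rfl, A_T1, B_T1]; have := pos w; omega

lemma sign1 (w : FreeMonoid (Fin 2)) :
    B (Φ (FreeMonoid.of 1 * w) (a * b)) < A (Φ (FreeMonoid.of 1 * w) (a * b)) := by
  rw [Φ_cons, if_neg (by decide), A_T2, B_T2]; have := pos w; omega

lemma sign_ne (y : Fin 2) (w : FreeMonoid (Fin 2)) :
    A (Φ (FreeMonoid.of y * w) (a * b)) ≠ B (Φ (FreeMonoid.of y * w) (a * b)) := by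
  by_cases hy : y = 0
  · subst hy; exact ne_of_lt (sign0 w)
  · have hy1 : y = 1 := by omega
    subst hy1; exact ne_of_gt (sign1 w)

/-- The submonoid of `End(F₂)` generated by `T̂₁` and `T̂₂` is free on these two
generators: the monoid homomorphism from the free monoid on two generators sending the
first generator to `T̂₁` and the second one to `T̂₂` is injective. -/
theorem T1hat_T2hat_generate_free_submonoid :
    Function.Injective
      ⇑(FreeMonoid.lift fun i : Fin 2 => if i = 0 then T1hat else T2hat) := by
  intro w1 w2 h
  change Φ w1 = Φ w2 at h
  induction w1 using FreeMonoid.recOn generalizing w2 with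
  | one =>
    induction w2 using FreeMonoid.recOn with
    | one => rfl
    | of_mul y ys _ =>
      exfalso
      apply sign_ne y ys
      have hA := congrArg (fun e : Monoid.End F2 => A (e (a * b))) h
      have hB := congrArg (fun e : Monoid.End F2 => B (e (a * b))) h
      simp only [map_one, Monoid.End.coe_one, id_eq] at hA hB
      rw [← hA, ← hB, A_ab, B_ab]
  | of_mul x xs ih =>
    induction w2 using FreeMonoid.recOn with
    | one =>
      exfalso
      apply sign_ne x xs
      have hA := congrArg (fun e : Monoid.End F2 => A (e (a * b))) h
      have hB := congrArg (fun e : Monoid.End F2 => B (e (a * b))) h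
      simp only [map_one, Monoid.End.coe_one, id_eq] at hA hB
      rw [hA, hB, A_ab, B_ab]
    | of_mul y ys _ =>
      by_cases hxy : x = y
      · subst hxy
        have hpt : ∀ g, (if x = 0 then T1hat else T2hat) (Φ xs g) =
            (if x = 0 then T1hat else T2hat) (Φ ys g) := by
          intro g
          rw [← Φ_cons, ← Φ_cons, h]
        have : Φ xs = Φ ys := by
          apply MonoidHom.ext
          intro g
          by_cases hx : x = 0
          · have := hpt g; rw [if_pos hx] at this; exact T1hat_inj this
          · have := hpt g; rw [if_neg hx] at this; exact T2hat_inj this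
        rw [ih this]
      · exfalso
        have hA := congrArg (fun e : Monoid.End F2 => A (e (a * b))) h
        have hB := congrArg (fun e : Monoid.End F2 => B (e (a * b))) h
        have hx0 : x = 0 ∨ x = 1 := by omega
        have hy0 : y = 0 ∨ y = 1 := by omega
        rcases hx0 with hx | hx <;> rcases hy0 with hy | hy <;> subst hx <;> subst hy
        · exact hxy rfl
        · have h1 := sign0 xs
          have h2 := sign1 ys
          omega
        · have h1 := sign1 xs
          have h2 := sign0 ys
          omega
        · exact hxy rfl
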